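/- Let Q(s) = v_j cosh s − 2∂_{v_j} sinh s + 2(cosh s − 1)∂_{x_j} as an operator on Schwartz functions of (x,v) ∈ ℝ^{2n}. For P₀ = −Δ_v + |v|²/4 − n/2 + v·∇_x, the commutator identity [P₀, Q(s)] = Q'(s) holds on Schwartz functions, where Q'(s) = v_j sinh s − 2∂_{v_j} cosh s + 2 sinh s ∂_{x_j}. -/

import Mathlib

noncomputable section

abbrev Phase (n : ℕ) := EuclideanSpace ℝ (Fin n) × EuclideanSpace ℝ (Fin n)

/-- Partial derivative in `x_i`. -/
def pdx (n : ℕ) (i : Fin n) (f : Phase n → ℂ) (p : Phase n) : ℂ :=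
  deriv (fun t : ℝ => f (p.1 + t • EuclideanSpace.single i 1, p.2)) 0

/-- Partial derivative in `v_i`. -/
def pdv (n : ℕ) (i : Fin n) (f : Phase n → ℂ) (p : Phase n) : ℂ :=
  deriv (fun t : ℝ => f (p.1, p.2 + t • EuclideanSpace.single i 1)) 0

/-- Laplacian in the velocity variable. -/
def lapv (n : ℕ) (f : Phase n → ℂ) (p : Phase n) : ℂ :=
  ∑ i : Fin n, iteratedDeriv 2 (fun t : ℝ => f (p.1, p.2 + t • EuclideanSpace.single i 1)) 0

/-- The free Kramers–Fokker–Planck operator `P₀ = −Δ_v + |v|²/4 − n/2 + v·∇_x`. -/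
def KFP0 (n : ℕ) (f : Phase n → ℂ) (p : Phase n) : ℂ :=
  -lapv n f p + ((‖p.2‖ ^ 2 / 4 - n / 2 : ℝ) : ℂ) * f p
    + ∑ i : Fin n, ((p.2 i : ℝ) : ℂ) * pdx n i f p

/-- `Q(s) = v_j cosh s − 2∂_{v_j} sinh s + 2(cosh s − 1)∂_{x_j}`. -/
def Qop (n : ℕ) (j : Fin n) (s : ℝ) (f : Phase n → ℂ) (q : Phase n) : ℂ :=
  ((Real.cosh s : ℝ) : ℂ) * ((q.2 j : ℝ) : ℂ) * f q
    - 2 * ((Real.sinh s : ℝ) : ℂ) * pdv n j f q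
    + 2 * (((Real.cosh s : ℝ) : ℂ) - 1) * pdx n j f q

/-- `Q'(s) = v_j sinh s − 2∂_{v_j} cosh s + 2 sinh s ∂_{x_j}`. -/
def Qop' (n : ℕ) (j : Fin n) (s : ℝ) (f : Phase n → ℂ) (q : Phase n) : ℂ :=
  ((Real.sinh s : ℝ) : ℂ) * ((q.2 j : ℝ) : ℂ) * f q
    - 2 * ((Real.cosh s : ℝ) : ℂ) * pdv n j f q
    + 2 * ((Real.sinh s : ℝ) : ℂ) * pdx n j f q

open scoped ContDiff

namespace KFPaux
variable {n : ℕ}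

/-- Directional derivative along a line. -/
def Dl (u : Phase n) (f : Phase n → ℂ) (p : Phase n) : ℂ :=
  deriv (fun t : ℝ => f (p + t • u)) 0

def eX (n : ℕ) (i : Fin n) : Phase n := (EuclideanSpace.single i 1, 0)
def eV (n : ℕ) (i : Fin n) : Phase n := (0, EuclideanSpace.single i 1)

lemma line_hasDerivAt (p u : Phase n) (t : ℝ) :
    HasDerivAt (fun s : ℝ => p + s • u) u t := by
  simpa using ((hasDerivAt_id t).smul_const u).const_add p

lemma comp_line_hasDerivAt {f : Phase n → ℂ} (hf : Differentiable ℝ f) (p u : Phase n)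
    (t : ℝ) : HasDerivAt (fun s : ℝ => f (p + s • u)) (fderiv ℝ f (p + t • u) u) t :=
  (hf (p + t • u)).hasFDerivAt.comp_hasDerivAt t (line_hasDerivAt p u t)

lemma Dl_eq_fderiv {f : Phase n → ℂ} (hf : Differentiable ℝ f) (u p : Phase n) :
    Dl u f p = fderiv ℝ f p u := by
  have h := (comp_line_hasDerivAt hf p u 0).deriv
  simpa [Dl] using h

lemma comp_line_hasDerivAt' {f : Phase n → ℂ} (hf : Differentiable ℝ f) (p u : Phase n) :
    HasDerivAt (fun s : ℝ => f (p + s • u)) (Dl u f p) 0 := by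
  rw [Dl_eq_fderiv hf]
  simpa using comp_line_hasDerivAt hf p u 0

lemma Dl_contDiff {f : Phase n → ℂ} (hf : ContDiff ℝ ∞ f) (u : Phase n) :
    ContDiff ℝ ∞ (Dl u f) := by
  have h : Dl u f = fun p => (ContinuousLinearMap.apply ℝ ℂ u) (fderiv ℝ f p) := by
    funext p; exact Dl_eq_fderiv (hf.differentiable (by norm_num)) u p
  rw [h]
  exact (ContinuousLinearMap.apply ℝ ℂ u).contDiff.comp (hf.fderiv_right (show ∞ + 1 ≤ ∞ from le_rfl))

lemma Dl_swap {f : Phase n → ℂ} (hf : ContDiff ℝ ∞ f) (u w p : Phase n) :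
    Dl u (Dl w f) p = Dl w (Dl u f) p := by
  have hdf : Differentiable ℝ f := hf.differentiable (by norm_num)
  have hfd : Differentiable ℝ (fderiv ℝ f) :=
    (hf.fderiv_right (show ∞ + 1 ≤ ∞ from le_rfl)).differentiable (by norm_num)
  have key : ∀ a b : Phase n, Dl a (Dl b f) p = fderiv ℝ (fderiv ℝ f) p a b := by
    intro a b
    have h1 : Dl b f = fun q => (ContinuousLinearMap.apply ℝ ℂ b) (fderiv ℝ f q) := by
      funext q; exact Dl_eq_fderiv hdf b q
    have h2 : HasFDerivAt (fun q => (ContinuousLinearMap.apply ℝ ℂ b) (fderiv ℝ f q))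
        ((ContinuousLinearMap.apply ℝ ℂ b).comp (fderiv ℝ (fderiv ℝ f) p)) p :=
      (ContinuousLinearMap.apply ℝ ℂ b).hasFDerivAt.comp p (hfd p).hasFDerivAt
    rw [h1, Dl_eq_fderiv (by rw [← h1]; exact (Dl_contDiff hf b).differentiable (by norm_num)) a p,
      h2.fderiv]
    rfl
  rw [key u w, key w u]
  exact (second_derivative_symmetric (fun y => (hdf y).hasFDerivAt) (hfd p).hasFDerivAt u w)

/-! ### Conversion of `pdx`, `pdv`, `lapv` to `Dl` form -/

lemma line_eX (p : Phase n) (i : Fin n) (t : ℝ) :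
    p + t • eX n i = (p.1 + t • EuclideanSpace.single i 1, p.2) := by
  ext <;> simp [eX]

lemma line_eV (p : Phase n) (i : Fin n) (t : ℝ) :
    p + t • eV n i = (p.1, p.2 + t • EuclideanSpace.single i 1) := by
  ext <;> simp [eV]

lemma pdx_eq (i : Fin n) (f : Phase n → ℂ) (p : Phase n) :
    pdx n i f p = Dl (eX n i) f p := by
  unfold pdx Dl; simp only [line_eX]

lemma pdv_eq (i : Fin n) (f : Phase n → ℂ) (p : Phase n) :
    pdv n i f p = Dl (eV n i) f p := by
  unfold pdv Dl; simp only [line_eV]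

lemma deriv_line {f : Phase n → ℂ} (hf : Differentiable ℝ f) (p u : Phase n) (t : ℝ) :
    deriv (fun s : ℝ => f (p + s • u)) t = Dl u f (p + t • u) := by
  rw [(comp_line_hasDerivAt hf p u t).deriv, Dl_eq_fderiv hf]

lemma iter2_line {f : Phase n → ℂ} (hf : Differentiable ℝ f) (p u : Phase n) :
    iteratedDeriv 2 (fun s : ℝ => f (p + s • u)) 0 = Dl u (Dl u f) p := by
  rw [show (2 : ℕ) = 1 + 1 from rfl, iteratedDeriv_succ, iteratedDeriv_one]
  have h : deriv (fun s : ℝ => f (p + s • u)) = fun s : ℝ => Dl u f (p + s • u) := by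
    funext t; exact deriv_line hf p u t
  rw [h]; rfl

lemma lapv_eq {f : Phase n → ℂ} (hf : Differentiable ℝ f) (p : Phase n) :
    lapv n f p = ∑ i : Fin n, Dl (eV n i) (Dl (eV n i) f) p := by
  unfold lapv
  refine Finset.sum_congr rfl fun i _ => ?_
  rw [← iter2_line hf p (eV n i)]
  simp only [line_eV]

/-! ### Linearity of `Dl` -/

lemma Dl_add {F G : Phase n → ℂ} (hF : Differentiable ℝ F) (hG : Differentiable ℝ G)
    (u p : Phase n) : Dl u (fun q => F q + G q) p = Dl u F p + Dl u G p := by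
  rw [Dl_eq_fderiv (hF.fun_add hG), Dl_eq_fderiv hF, Dl_eq_fderiv hG, fderiv_fun_add (hF p) (hG p)]
  rfl

lemma Dl_sub {F G : Phase n → ℂ} (hF : Differentiable ℝ F) (hG : Differentiable ℝ G)
    (u p : Phase n) : Dl u (fun q => F q - G q) p = Dl u F p - Dl u G p := by
  rw [Dl_eq_fderiv (hF.fun_sub hG), Dl_eq_fderiv hF, Dl_eq_fderiv hG, fderiv_fun_sub (hF p) (hG p)]
  rfl

lemma Dl_const_mul (a : ℂ) (F : Phase n → ℂ) (u p : Phase n) :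
    Dl u (fun q => a * F q) p = a * Dl u F p := by
  unfold Dl; exact deriv_const_mul_field a

lemma Dl_sum {F : Fin n → Phase n → ℂ} (hF : ∀ i, Differentiable ℝ (F i)) (u p : Phase n) :
    Dl u (fun q => ∑ i : Fin n, F i q) p = ∑ i : Fin n, Dl u (F i) p := by
  rw [Dl_eq_fderiv (Differentiable.fun_sum fun i _ => hF i)]
  rw [fderiv_fun_sum fun i _ => (hF i _)]
  simp only [ContinuousLinearMap.coe_sum', Finset.sum_apply]
  exact Finset.sum_congr rfl fun i _ => (Dl_eq_fderiv (hF i) u p).symm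

/-! ### Coefficient product rules -/

lemma hasDerivAt_ofReal (t : ℝ) : HasDerivAt (fun s : ℝ => (s : ℂ)) 1 t := by
  simpa using (hasDerivAt_id t).ofReal_comp

lemma coord_line_eV (p : Phase n) (i j : Fin n) (t : ℝ) :
    (p + t • eV n i).2 j = p.2 j + t * (if j = i then (1:ℝ) else 0) := by
  rw [line_eV]
  simp [EuclideanSpace.single_apply]

lemma coord_line_eX (p : Phase n) (i : Fin n) (t : ℝ) : (p + t • eX n i).2 = p.2 := by
  rw [line_eX]

lemma Dl_coordmul_eV {F : Phase n → ℂ} (hF : Differentiable ℝ F) (i j : Fin n) (p : Phase n) :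
    Dl (eV n i) (fun q => ((q.2 j : ℝ) : ℂ) * F q) p
      = ((if j = i then (1:ℝ) else 0 : ℝ) : ℂ) * F p + ((p.2 j : ℝ) : ℂ) * Dl (eV n i) F p := by
  have hc : HasDerivAt (fun t : ℝ => (((p + t • eV n i).2 j : ℝ) : ℂ))
      ((if j = i then (1:ℝ) else 0 : ℝ) : ℂ) 0 := by
    have h : (fun t : ℝ => (((p + t • eV n i).2 j : ℝ) : ℂ))
        = fun t : ℝ => ((p.2 j : ℝ) : ℂ) + ((if j = i then (1:ℝ) else 0 : ℝ) : ℂ) * (t : ℂ) := by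
      funext t; rw [coord_line_eV]; push_cast; ring
    rw [h]
    simpa using (((hasDerivAt_ofReal 0).const_mul
      (((if j = i then (1:ℝ) else 0 : ℝ) : ℂ))).const_add ((p.2 j : ℝ) : ℂ))
  have h := (hc.fun_mul (comp_line_hasDerivAt' hF p (eV n i))).deriv
  unfold Dl
  rw [h]
  simp only [zero_smul, add_zero]
  rfl

lemma Dl_coordmul_eX {F : Phase n → ℂ} (i j : Fin n) (p : Phase n) :
    Dl (eX n i) (fun q => ((q.2 j : ℝ) : ℂ) * F q) p
      = ((p.2 j : ℝ) : ℂ) * Dl (eX n i) F p := by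
  unfold Dl
  simp only [coord_line_eX]
  exact deriv_const_mul_field _

/-- The potential coefficient. -/
def W (n : ℕ) (q : Phase n) : ℝ := ‖q.2‖ ^ 2 / 4 - n / 2

lemma W_line_eV (p : Phase n) (i : Fin n) (t : ℝ) :
    W n (p + t • eV n i) = (‖p.2‖ ^ 2 + 2 * (t * p.2 i) + t ^ 2) / 4 - n / 2 := by
  rw [line_eV]
  show ‖p.2 + t • EuclideanSpace.single i (1:ℝ)‖ ^ 2 / 4 - (n:ℝ)/2 = _
  have : ‖p.2 + t • EuclideanSpace.single i (1:ℝ)‖ ^ 2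
      = ‖p.2‖ ^ 2 + 2 * (t * p.2 i) + t ^ 2 := by
    rw [norm_add_sq_real, real_inner_smul_right]
    have h1 : (inner ℝ p.2 (EuclideanSpace.single i (1:ℝ)) : ℝ) = p.2 i := by
      simpa using EuclideanSpace.inner_single_right (𝕜 := ℝ) i 1 p.2
    rw [h1]
    have h2 : ‖t • EuclideanSpace.single i (1:ℝ)‖ = |t| := by
      rw [norm_smul]; simp
    rw [h2]
    rw [sq_abs]
  rw [this]

lemma Dl_Wmul_eV {F : Phase n → ℂ} (hF : Differentiable ℝ F) (i : Fin n) (p : Phase n) :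
    Dl (eV n i) (fun q => ((W n q : ℝ) : ℂ) * F q) p
      = ((p.2 i / 2 : ℝ) : ℂ) * F p + ((W n p : ℝ) : ℂ) * Dl (eV n i) F p := by
  have hr : HasDerivAt (fun t : ℝ => (‖p.2‖ ^ 2 + 2 * (t * p.2 i) + t ^ 2) / 4 - (n:ℝ) / 2)
      (p.2 i / 2) 0 := by
    have h1 : HasDerivAt (fun t : ℝ => ‖p.2‖ ^ 2 + 2 * (t * p.2 i) + t ^ 2)
        (2 * p.2 i) 0 := by
      have ha : HasDerivAt (fun t : ℝ => ‖p.2‖ ^ 2 + 2 * (t * p.2 i)) (2 * p.2 i) 0 := by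
        simpa using (((hasDerivAt_id (0:ℝ)).mul_const (p.2 i)).const_mul 2).const_add (‖p.2‖ ^ 2)
      have hb : HasDerivAt (fun t : ℝ => t ^ 2) 0 0 := by
        simpa using hasDerivAt_pow 2 (0:ℝ)
      simpa using ha.fun_add hb
    have := (h1.div_const 4).sub_const ((n:ℝ) / 2)
    rw [show p.2 i / 2 = 2 * p.2 i / 4 by ring]
    exact this
  have hc : HasDerivAt (fun t : ℝ => ((W n (p + t • eV n i) : ℝ) : ℂ))
      ((p.2 i / 2 : ℝ) : ℂ) 0 := by
    have h : (fun t : ℝ => ((W n (p + t • eV n i) : ℝ) : ℂ))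
        = fun t : ℝ => (((‖p.2‖ ^ 2 + 2 * (t * p.2 i) + t ^ 2) / 4 - (n:ℝ) / 2 : ℝ) : ℂ) := by
      funext t; rw [W_line_eV]
    rw [h]
    exact hr.ofReal_comp
  have h := (hc.fun_mul (comp_line_hasDerivAt' hF p (eV n i))).deriv
  unfold Dl
  rw [h]
  simp only [zero_smul, add_zero]
  rfl

lemma Dl_Wmul_eX {F : Phase n → ℂ} (i : Fin n) (p : Phase n) :
    Dl (eX n i) (fun q => ((W n q : ℝ) : ℂ) * F q) p
      = ((W n p : ℝ) : ℂ) * Dl (eX n i) F p := by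
  unfold Dl
  have h : ∀ t : ℝ, W n (p + t • eX n i) = W n p := by
    intro t; rw [W, W, coord_line_eX]
  simp only [h]
  exact deriv_const_mul_field _

/-! ### Smoothness closure -/

lemma contDiff_coord (j : Fin n) : ContDiff ℝ ∞ (fun q : Phase n => ((q.2 j : ℝ) : ℂ)) := by
  exact Complex.ofRealCLM.contDiff.comp
    ((EuclideanSpace.proj (𝕜 := ℝ) j).contDiff.comp (contDiff_snd))

lemma contDiff_Wc : ContDiff ℝ ∞ (fun q : Phase n => ((W n q : ℝ) : ℂ)) := by
  refine Complex.ofRealCLM.contDiff.comp ?_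
  show ContDiff ℝ ∞ fun q : Phase n => ‖q.2‖ ^ 2 / 4 - (n:ℝ) / 2
  exact (((contDiff_norm_sq ℝ).comp contDiff_snd).div_const 4).sub contDiff_const

lemma contDiff_coordmul {F : Phase n → ℂ} (hF : ContDiff ℝ ∞ F) (j : Fin n) :
    ContDiff ℝ ∞ (fun q : Phase n => ((q.2 j : ℝ) : ℂ) * F q) :=
  (contDiff_coord j).mul hF

lemma contDiff_Wmul {F : Phase n → ℂ} (hF : ContDiff ℝ ∞ F) :
    ContDiff ℝ ∞ (fun q : Phase n => ((W n q : ℝ) : ℂ) * F q) :=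
  contDiff_Wc.mul hF

lemma cd_diff {F : Phase n → ℂ} (hF : ContDiff ℝ ∞ F) : Differentiable ℝ F :=
  hF.differentiable (by norm_num)

lemma Dl_sum3 {g : Phase n → ℂ} (hg : ContDiff ℝ ∞ g) (u w p) :
    Dl w (Dl u (Dl u g)) p = Dl u (Dl u (Dl w g)) p := by
  rw [Dl_swap (Dl_contDiff hg u) w u p]
  congr 1; funext q; exact Dl_swap hg w u q

lemma sum_delta (j : Fin n) (X : Fin n → ℂ) :
    ∑ i : Fin n, ((if j = i then (1:ℝ) else 0 : ℝ) : ℂ) * X i = X j := by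
  rw [Finset.sum_eq_single j]
  · simp
  · intro i _ hij
    rw [if_neg fun h => hij h.symm]
    simp
  · intro h; exact absurd (Finset.mem_univ j) h

lemma sum_delta' (j : Fin n) (X : Fin n → ℂ) :
    ∑ i : Fin n, ((if i = j then (1:ℝ) else 0 : ℝ) : ℂ) * X i = X j := by
  rw [Finset.sum_eq_single j]
  · simp
  · intro i _ hij
    rw [if_neg hij]
    simp
  · intro h; exact absurd (Finset.mem_univ j) h

/-- `KFP0` in directional-derivative form. -/
def Kform (n : ℕ) (g : Phase n → ℂ) (p : Phase n) : ℂ :=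
  -∑ i : Fin n, Dl (eV n i) (Dl (eV n i) g) p + ((W n p : ℝ) : ℂ) * g p
    + ∑ i : Fin n, ((p.2 i : ℝ) : ℂ) * Dl (eX n i) g p

lemma KFP0_eq {g : Phase n → ℂ} (hg : ContDiff ℝ ∞ g) (p : Phase n) :
    KFP0 n g p = Kform n g p := by
  unfold KFP0 Kform W
  rw [lapv_eq (cd_diff hg)]
  simp only [pdx_eq]

lemma Kform_add {F G : Phase n → ℂ} (hF : ContDiff ℝ ∞ F) (hG : ContDiff ℝ ∞ G)
    (p : Phase n) :
    Kform n (fun q => F q + G q) p = Kform n F p + Kform n G p := by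
  have h1 : ∀ i : Fin n, Dl (eV n i) (fun q => F q + G q)
      = fun q => Dl (eV n i) F q + Dl (eV n i) G q :=
    fun i => funext fun q => Dl_add (cd_diff hF) (cd_diff hG) _ q
  have h2 : ∀ i : Fin n, Dl (eV n i) (Dl (eV n i) (fun q => F q + G q)) p
      = Dl (eV n i) (Dl (eV n i) F) p + Dl (eV n i) (Dl (eV n i) G) p := by
    intro i
    rw [h1 i]
    exact Dl_add (cd_diff (Dl_contDiff hF _)) (cd_diff (Dl_contDiff hG _)) _ p
  have h3 : ∀ i : Fin n, Dl (eX n i) (fun q => F q + G q) p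
      = Dl (eX n i) F p + Dl (eX n i) G p :=
    fun i => Dl_add (cd_diff hF) (cd_diff hG) _ p
  unfold Kform
  simp only [h2, h3]
  rw [Finset.sum_add_distrib]
  have h4 : ∑ i : Fin n, ((p.2 i : ℝ) : ℂ) * (Dl (eX n i) F p + Dl (eX n i) G p)
      = ∑ i : Fin n, ((p.2 i : ℝ) : ℂ) * Dl (eX n i) F p
        + ∑ i : Fin n, ((p.2 i : ℝ) : ℂ) * Dl (eX n i) G p := by
    rw [← Finset.sum_add_distrib]
    exact Finset.sum_congr rfl fun i _ => by ring
  rw [h4]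
  ring

lemma Kform_const_mul (a : ℂ) (F : Phase n → ℂ) (p : Phase n) :
    Kform n (fun q => a * F q) p = a * Kform n F p := by
  have h1 : ∀ i : Fin n, Dl (eV n i) (fun q => a * F q) = fun q => a * Dl (eV n i) F q :=
    fun i => funext fun q => Dl_const_mul a F _ q
  unfold Kform
  simp only [h1, Dl_const_mul]
  have h2 : ∑ i : Fin n, a * Dl (eV n i) (Dl (eV n i) F) p
      = a * ∑ i : Fin n, Dl (eV n i) (Dl (eV n i) F) p := (Finset.mul_sum _ _ _).symm
  have h3 : ∑ i : Fin n, ((p.2 i : ℝ) : ℂ) * (a * Dl (eX n i) F p)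
      = a * ∑ i : Fin n, ((p.2 i : ℝ) : ℂ) * Dl (eX n i) F p := by
    rw [Finset.mul_sum]
    exact Finset.sum_congr rfl fun i _ => by ring
  rw [h2, h3]
  ring

/-- Commutator with multiplication by `v_j`. -/
lemma comm_coordmul {g : Phase n → ℂ} (hg : ContDiff ℝ ∞ g) (j : Fin n) (p : Phase n) :
    Kform n (fun q => ((q.2 j : ℝ) : ℂ) * g q) p
      = ((p.2 j : ℝ) : ℂ) * Kform n g p - 2 * Dl (eV n j) g p := by
  have hd := cd_diff hg
  have h1 : ∀ i : Fin n, Dl (eV n i) (fun q => ((q.2 j : ℝ) : ℂ) * g q)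
      = fun q => ((if j = i then (1:ℝ) else 0 : ℝ) : ℂ) * g q
          + ((q.2 j : ℝ) : ℂ) * Dl (eV n i) g q :=
    fun i => funext fun q => Dl_coordmul_eV hd i j q
  have h2 : ∀ i : Fin n, Dl (eV n i) (Dl (eV n i) (fun q => ((q.2 j : ℝ) : ℂ) * g q)) p
      = ((if j = i then (1:ℝ) else 0 : ℝ) : ℂ) * (2 * Dl (eV n i) g p)
        + ((p.2 j : ℝ) : ℂ) * Dl (eV n i) (Dl (eV n i) g) p := by
    intro i
    rw [h1 i, Dl_add (cd_diff (contDiff_const.mul hg))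
      (cd_diff (contDiff_coordmul (Dl_contDiff hg _) j)) _ p, Dl_const_mul,
      Dl_coordmul_eV (cd_diff (Dl_contDiff hg _)) i j p]
    ring
  have h3 : ∀ i : Fin n, Dl (eX n i) (fun q => ((q.2 j : ℝ) : ℂ) * g q) p
      = ((p.2 j : ℝ) : ℂ) * Dl (eX n i) g p := fun i => Dl_coordmul_eX i j p
  unfold Kform
  simp only [h2, h3]
  rw [Finset.sum_add_distrib, sum_delta j (fun i => 2 * Dl (eV n i) g p)]
  have h4 : ∑ i : Fin n, ((p.2 j : ℝ) : ℂ) * Dl (eV n i) (Dl (eV n i) g) p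
      = ((p.2 j : ℝ) : ℂ) * ∑ i : Fin n, Dl (eV n i) (Dl (eV n i) g) p :=
    (Finset.mul_sum _ _ _).symm
  have h5 : ∑ i : Fin n, ((p.2 i : ℝ) : ℂ) * (((p.2 j : ℝ) : ℂ) * Dl (eX n i) g p)
      = ((p.2 j : ℝ) : ℂ) * ∑ i : Fin n, ((p.2 i : ℝ) : ℂ) * Dl (eX n i) g p := by
    rw [Finset.mul_sum]
    exact Finset.sum_congr rfl fun i _ => by ring
  rw [h4, h5]
  ring

/-- Commutator with `∂_{v_j}`. -/
lemma comm_pdv {g : Phase n → ℂ} (hg : ContDiff ℝ ∞ g) (j : Fin n) (p : Phase n) :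
    Kform n (Dl (eV n j) g) p
      = Dl (eV n j) (fun q => Kform n g q) p
        - (1/2) * ((p.2 j : ℝ) : ℂ) * g p - Dl (eX n j) g p := by
  have hd := cd_diff hg
  have hdiffS : ∀ i : Fin n, Differentiable ℝ (Dl (eV n i) (Dl (eV n i) g)) :=
    fun i => cd_diff (Dl_contDiff (Dl_contDiff hg _) _)
  have hdiffT : ∀ i : Fin n, Differentiable ℝ (fun q => ((q.2 i : ℝ) : ℂ) * Dl (eX n i) g q) :=
    fun i => cd_diff (contDiff_coordmul (Dl_contDiff hg _) i)
  have hdiffW : Differentiable ℝ (fun q => ((W n q : ℝ) : ℂ) * g q) := cd_diff (contDiff_Wmul hg)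
  have hKsplit : (fun q => Kform n g q) = fun q =>
      (((W n q : ℝ) : ℂ) * g q + ∑ i : Fin n, ((q.2 i : ℝ) : ℂ) * Dl (eX n i) g q)
        - ∑ i : Fin n, Dl (eV n i) (Dl (eV n i) g) q := by
    funext q; unfold Kform; ring
  have hRHS : Dl (eV n j) (fun q => Kform n g q) p
      = (((p.2 j / 2 : ℝ) : ℂ) * g p + ((W n p : ℝ) : ℂ) * Dl (eV n j) g p
          + (Dl (eX n j) g p
            + ∑ i : Fin n, ((p.2 i : ℝ) : ℂ) * Dl (eX n i) (Dl (eV n j) g) p))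
        - ∑ i : Fin n, Dl (eV n i) (Dl (eV n i) (Dl (eV n j) g)) p := by
    rw [hKsplit, Dl_sub (hdiffW.fun_add (Differentiable.fun_sum fun i _ => hdiffT i))
      (Differentiable.fun_sum fun i _ => hdiffS i),
      Dl_add hdiffW (Differentiable.fun_sum fun i _ => hdiffT i),
      Dl_Wmul_eV hd j p, Dl_sum hdiffT, Dl_sum hdiffS]
    have hS : ∀ i : Fin n, Dl (eV n j) (Dl (eV n i) (Dl (eV n i) g)) p
        = Dl (eV n i) (Dl (eV n i) (Dl (eV n j) g)) p :=
      fun i => Dl_sum3 hg (eV n i) (eV n j) p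
    have hT : ∀ i : Fin n, Dl (eV n j) (fun q => ((q.2 i : ℝ) : ℂ) * Dl (eX n i) g q) p
        = ((if i = j then (1:ℝ) else 0 : ℝ) : ℂ) * Dl (eX n i) g p
          + ((p.2 i : ℝ) : ℂ) * Dl (eX n i) (Dl (eV n j) g) p := by
      intro i
      rw [Dl_coordmul_eV (cd_diff (Dl_contDiff hg _)) j i p,
        ← Dl_swap hg (eX n i) (eV n j) p]
    simp only [hS, hT]
    rw [Finset.sum_add_distrib, sum_delta' j (fun i => Dl (eX n i) g p)]
  rw [hRHS]
  unfold Kform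
  push_cast
  ring

/-- Commutator with `∂_{x_j}`. -/
lemma comm_pdx {g : Phase n → ℂ} (hg : ContDiff ℝ ∞ g) (j : Fin n) (p : Phase n) :
    Kform n (Dl (eX n j) g) p = Dl (eX n j) (fun q => Kform n g q) p := by
  have hd := cd_diff hg
  have hdiffS : ∀ i : Fin n, Differentiable ℝ (Dl (eV n i) (Dl (eV n i) g)) :=
    fun i => cd_diff (Dl_contDiff (Dl_contDiff hg _) _)
  have hdiffT : ∀ i : Fin n, Differentiable ℝ (fun q => ((q.2 i : ℝ) : ℂ) * Dl (eX n i) g q) :=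
    fun i => cd_diff (contDiff_coordmul (Dl_contDiff hg _) i)
  have hdiffW : Differentiable ℝ (fun q => ((W n q : ℝ) : ℂ) * g q) := cd_diff (contDiff_Wmul hg)
  have hKsplit : (fun q => Kform n g q) = fun q =>
      (((W n q : ℝ) : ℂ) * g q + ∑ i : Fin n, ((q.2 i : ℝ) : ℂ) * Dl (eX n i) g q)
        - ∑ i : Fin n, Dl (eV n i) (Dl (eV n i) g) q := by
    funext q; unfold Kform; ring
  have hRHS : Dl (eX n j) (fun q => Kform n g q) p
      = (((W n p : ℝ) : ℂ) * Dl (eX n j) g p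
          + ∑ i : Fin n, ((p.2 i : ℝ) : ℂ) * Dl (eX n i) (Dl (eX n j) g) p)
        - ∑ i : Fin n, Dl (eV n i) (Dl (eV n i) (Dl (eX n j) g)) p := by
    rw [hKsplit, Dl_sub (hdiffW.fun_add (Differentiable.fun_sum fun i _ => hdiffT i))
      (Differentiable.fun_sum fun i _ => hdiffS i),
      Dl_add hdiffW (Differentiable.fun_sum fun i _ => hdiffT i),
      Dl_Wmul_eX j p, Dl_sum hdiffT, Dl_sum hdiffS]
    have hS : ∀ i : Fin n, Dl (eX n j) (Dl (eV n i) (Dl (eV n i) g)) p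
        = Dl (eV n i) (Dl (eV n i) (Dl (eX n j) g)) p :=
      fun i => Dl_sum3 hg (eV n i) (eX n j) p
    have hT : ∀ i : Fin n, Dl (eX n j) (fun q => ((q.2 i : ℝ) : ℂ) * Dl (eX n i) g q) p
        = ((p.2 i : ℝ) : ℂ) * Dl (eX n i) (Dl (eX n j) g) p := by
      intro i
      rw [Dl_coordmul_eX j i p, ← Dl_swap hg (eX n i) (eX n j) p]
    simp only [hS, hT]
  rw [hRHS]
  unfold Kform
  ring

end KFPaux

open KFPaux

/-- The commutator identity `[P₀, Q(s)] = Q'(s)` on Schwartz functions. -/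
theorem commutator_P0_Q (n : ℕ) (j : Fin n) (s : ℝ) (f : SchwartzMap (Phase n) ℂ)
    (p : Phase n) :
    KFP0 n (Qop n j s (⇑f)) p - Qop n j s (KFP0 n (⇑f)) p = Qop' n j s (⇑f) p := by
  have hg : ContDiff ℝ ∞ (⇑f) := f.smooth ⊤
  have h0 : ContDiff ℝ ∞ (fun q : Phase n => ((q.2 j : ℝ) : ℂ) * f q) := contDiff_coordmul hg j
  have h1 : ContDiff ℝ ∞ (Dl (eV n j) (⇑f)) := Dl_contDiff hg _
  have h2 : ContDiff ℝ ∞ (Dl (eX n j) (⇑f)) := Dl_contDiff hg _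
  have ha : ContDiff ℝ ∞ (fun q : Phase n =>
      ((Real.cosh s : ℝ) : ℂ) * (((q.2 j : ℝ) : ℂ) * f q)) := contDiff_const.mul h0
  have hb : ContDiff ℝ ∞ (fun q : Phase n =>
      (-(2 * ((Real.sinh s : ℝ) : ℂ))) * Dl (eV n j) (⇑f) q) := contDiff_const.mul h1
  have h01 : ContDiff ℝ ∞ (fun q : Phase n =>
      ((Real.cosh s : ℝ) : ℂ) * (((q.2 j : ℝ) : ℂ) * f q)
        + (-(2 * ((Real.sinh s : ℝ) : ℂ))) * Dl (eV n j) (⇑f) q) := ha.add hb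
  have h2' : ContDiff ℝ ∞ (fun q : Phase n =>
      (2 * (((Real.cosh s : ℝ) : ℂ) - 1)) * Dl (eX n j) (⇑f) q) := contDiff_const.mul h2
  have hQ : Qop n j s (⇑f) = fun q =>
      (((Real.cosh s : ℝ) : ℂ) * (((q.2 j : ℝ) : ℂ) * f q)
        + (-(2 * ((Real.sinh s : ℝ) : ℂ))) * Dl (eV n j) (⇑f) q)
        + (2 * (((Real.cosh s : ℝ) : ℂ) - 1)) * Dl (eX n j) (⇑f) q := by
    funext q; unfold Qop; rw [pdv_eq, pdx_eq]; ring
  have hQs : ContDiff ℝ ∞ (Qop n j s (⇑f)) := by rw [hQ]; exact h01.add h2'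
  rw [KFP0_eq hQs p, hQ, Kform_add h01 h2' p, Kform_add ha hb p,
    Kform_const_mul, Kform_const_mul, Kform_const_mul,
    comm_coordmul hg j p, comm_pdv hg j p, comm_pdx hg j p]
  unfold Qop Qop'
  rw [KFP0_eq hg p]
  have hKf : KFP0 n (⇑f) = fun q => Kform n (⇑f) q := funext fun q => KFP0_eq hg q
  rw [hKf]
  simp only [pdv_eq, pdx_eq]
  ring


end
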